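/- Let G be a locally pseudocompact Hausdorff topological group. If every countable subgroup of G is locally pseudocompact, then G is discrete. -/

import Mathlib

/-- A topological space is *pseudocompact* if every continuous real-valued function
on it is bounded. -/
def Pseudocompact (X : Type*) [TopologicalSpace X] : Prop :=
  ∀ f : X → ℝ, Continuous f → ∃ M : ℝ, ∀ x : X, |f x| ≤ M

/-- A topological group is *locally pseudocompact* if some neighborhood of the identity
has pseudocompact closure. -/
def LocallyPseudocompact (G : Type*) [Group G] [TopologicalSpace G] : Prop :=
  ∃ U ∈ nhds (1 : G), Pseudocompact (closure U)


open Set NNReal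

theorem sym_chain {G : Type*} [Group G] [TopologicalSpace G] [IsTopologicalGroup G]
    {S : Set G} (hS : IsOpen S) (h1 : (1:G) ∈ S) :
    ∃ T : Set G, (IsOpen T ∧ (1:G) ∈ T ∧ ∀ a ∈ T, a⁻¹ ∈ T) ∧ T ⊆ S ∧
      (∀ a ∈ T, ∀ b ∈ T, ∀ c ∈ T, a * b * c ∈ S) := by
  obtain ⟨A, hAo, hA1, hAA⟩ := exists_open_nhds_one_mul_subset (hS.mem_nhds h1)
  obtain ⟨B, hBo, hB1, hBB⟩ := exists_open_nhds_one_mul_subset (hAo.mem_nhds hA1)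
  have hBA : B ⊆ A := fun b hb => by
    have := hBB (Set.mul_mem_mul hb hB1); rwa [mul_one] at this
  have hAS : A ⊆ S := fun a ha => by
    have := hAA (Set.mul_mem_mul ha hA1); rwa [mul_one] at this
  refine ⟨B ∩ B⁻¹, ⟨hBo.inter hBo.inv, ⟨hB1, by simpa using hB1⟩, ?_⟩,
    fun b hb => hAS (hBA hb.1), ?_⟩
  · rintro a ⟨h1', h2'⟩
    exact ⟨h2', by simpa using h1'⟩
  · rintro a ⟨ha, -⟩ b ⟨hb, -⟩ c ⟨hc, -⟩
    exact hAA (Set.mul_mem_mul (hBB (Set.mul_mem_mul ha hb)) (hBA hc))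

theorem exists_bump {G : Type*} [Group G] [TopologicalSpace G] [IsTopologicalGroup G]
    {D : Set G} (hD : IsOpen D) {x : G} (hx : x ∈ D) :
    ∃ f : G → ℝ, Continuous f ∧ f x = 1 ∧ (∀ y, y ∉ D → f y = 0) ∧ (∀ y, 0 ≤ f y) := by
  classical
  set S₀ : Set G := (fun g => x * g) ⁻¹' D with hS₀def
  have hS₀o : IsOpen S₀ := hD.preimage (continuous_mul_left x)
  have hS₀1 : (1:G) ∈ S₀ := by simpa [hS₀def] using hx
  set P : Set G → Prop := fun T => IsOpen T ∧ (1:G) ∈ T ∧ ∀ a ∈ T, a⁻¹ ∈ T with hPdef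
  have step : ∀ T : Set G, P T → ∃ T', P T' ∧ T' ⊆ T ∧
      (∀ a ∈ T', ∀ b ∈ T', ∀ c ∈ T', a * b * c ∈ T) := fun T hT => sym_chain hT.1 hT.2.1
  obtain ⟨T₀, hT₀P, hT₀S, -⟩ := sym_chain hS₀o hS₀1
  let seq : ℕ → {T : Set G // P T} := fun n => Nat.rec ⟨T₀, hT₀P⟩
    (fun _ prev => ⟨(step prev.1 prev.2).choose, (step prev.1 prev.2).choose_spec.1⟩) n
  set V : ℕ → Set G := fun n => (seq n).1 with hVdef
  have hP : ∀ n, P (V n) := fun n => (seq n).2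
  have hVo : ∀ n, IsOpen (V n) := fun n => (hP n).1
  have hV1 : ∀ n, (1:G) ∈ V n := fun n => (hP n).2.1
  have hVsym : ∀ n, ∀ a ∈ V n, a⁻¹ ∈ V n := fun n => (hP n).2.2
  have hVstep : ∀ n, V (n+1) ⊆ V n ∧
      (∀ a ∈ V (n+1), ∀ b ∈ V (n+1), ∀ c ∈ V (n+1), a * b * c ∈ V n) := fun n =>
    ⟨(step (seq n).1 (seq n).2).choose_spec.2.1, (step (seq n).1 (seq n).2).choose_spec.2.2⟩
  have hVanti : Antitone V := antitone_nat_of_succ_le fun n => (hVstep n).1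
  have hV0 : V 0 ⊆ S₀ := hT₀S
  -- the premetric
  set e : G → ℝ≥0 := fun g => if h : ∃ n, g ∉ V n then (1/2 : ℝ≥0) ^ (Nat.find h) else 0
    with hedef
  have hr : (1/2 : ℝ≥0) ∈ Set.Ioo (0 : ℝ≥0) 1 := ⟨half_pos one_pos, NNReal.half_lt_self one_ne_zero⟩
  have hle : ∀ g n, (1/2 : ℝ≥0) ^ n ≤ e g ↔ g ∉ V n := by
    intro g n
    simp only [hedef]
    split_ifs with h
    · rw [(pow_right_strictAnti₀ hr.1 hr.2).le_iff_ge, Nat.find_le_iff]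
      constructor
      · rintro ⟨m, hmn, hm⟩ hn; exact hm (hVanti hmn hn)
      · exact fun h' => ⟨n, le_rfl, h'⟩
    · push_neg at h
      simp [h n, (pow_pos hr.1 n).not_ge]
  have heself : e 1 = 0 := by
    rw [hedef]; exact dif_neg (by push_neg; exact hV1)
  have hesymm : ∀ g, e g⁻¹ = e g := by
    intro g
    have : ∀ n, (g⁻¹ ∉ V n) = (g ∉ V n) := fun n => propext (by
      constructor
      · intro h hg; exact h (hVsym n g hg)
      · intro h hg; exact h (by simpa using hVsym n g⁻¹ hg))
    simp only [hedef, this]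
  have he3 : ∀ g1 g2 g3 : G, e (g1 * g2 * g3) ≤ 2 * max (e g1) (max (e g2) (e g3)) := by
    intro g1 g2 g3
    by_cases H : ∃ n, g1 * g2 * g3 ∉ V n
    · have hspec := Nat.find_spec H
      have hmax : (1/2 : ℝ≥0) ^ (Nat.find H + 1) ≤ max (e g1) (max (e g2) (e g3)) := by
        by_contra hlt
        push_neg at hlt
        have h1' : g1 ∈ V (Nat.find H + 1) := by
          by_contra h'
          exact absurd (((hle g1 _).2 h').trans (le_max_left _ _)) hlt.not_ge
        have h2' : g2 ∈ V (Nat.find H + 1) := by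
          by_contra h'
          exact absurd (((hle g2 _).2 h').trans ((le_max_left _ _).trans (le_max_right _ _)))
            hlt.not_ge
        have h3' : g3 ∈ V (Nat.find H + 1) := by
          by_contra h'
          exact absurd (((hle g3 _).2 h').trans ((le_max_right _ _).trans (le_max_right _ _)))
            hlt.not_ge
        exact hspec ((hVstep (Nat.find H)).2 g1 h1' g2 h2' g3 h3')
      have heval : e (g1 * g2 * g3) = (1/2 : ℝ≥0) ^ (Nat.find H) := by
        rw [hedef]; exact dif_pos H
      rw [heval]
      calc (1/2 : ℝ≥0) ^ (Nat.find H) = 2 * (1/2 : ℝ≥0) ^ (Nat.find H + 1) := by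
            rw [pow_succ]
            rw [mul_comm ((1/2 : ℝ≥0) ^ (Nat.find H)) (1/2 : ℝ≥0), ← mul_assoc]
            norm_num
        _ ≤ 2 * max (e g1) (max (e g2) (e g3)) := mul_le_mul_right hmax 2
    · have h0 : e (g1 * g2 * g3) = 0 := by rw [hedef]; exact dif_neg H
      rw [h0]; exact zero_le
  -- small values on V n
  have hesmall : ∀ g n, g ∈ V n → e g ≤ (1/2 : ℝ≥0) ^ n := by
    intro g n hg
    by_contra h'
    exact ((hle g n).1 (le_of_not_ge fun hh => h' hh)) hg
  -- the pre-distance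
  set d : G → G → ℝ≥0 := fun a b => e (a⁻¹ * b) with hddef
  have dself : ∀ a : G, d a a = 0 := fun a => by
    simp only [hddef, inv_mul_cancel, heself]
  have dcomm : ∀ a b : G, d a b = d b a := fun a b => by
    simp only [hddef]
    rw [← hesymm (a⁻¹ * b), mul_inv_rev, inv_inv]
  have quad : ∀ x1 x2 x3 x4 : G, d x1 x4 ≤ 2 * max (d x1 x2) (max (d x2 x3) (d x3 x4)) := by
    intro x1 x2 x3 x4
    have hx14 : x1⁻¹ * x4 = (x1⁻¹ * x2) * (x2⁻¹ * x3) * (x3⁻¹ * x4) := by group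
    simp only [hddef]
    rw [hx14]
    exact he3 _ _ _
  set I := PseudoMetricSpace.ofPreNNDist d dself dcomm with hIdef
  set ρ : G → G → ℝ := fun a b => @dist G (@PseudoMetricSpace.toDist G I) a b with hρdef
  have hρ_le : ∀ a b : G, ρ a b ≤ (d a b : ℝ) := fun a b =>
    PseudoMetricSpace.dist_ofPreNNDist_le d dself dcomm a b
  have hle_ρ : ∀ a b : G, (d a b : ℝ) ≤ 2 * ρ a b := fun a b =>
    PseudoMetricSpace.le_two_mul_dist_ofPreNNDist d dself dcomm quad a b
  have htri : ∀ y y₀ : G, |ρ x y - ρ x y₀| ≤ ρ y₀ y := by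
    intro y y₀
    have h := @abs_dist_sub_le G I y y₀ x
    rw [@dist_comm G I y x, @dist_comm G I y₀ x, @dist_comm G I y y₀] at h
    exact h
  have hρcont : Continuous (fun y => ρ x y) := by
    rw [continuous_iff_continuousAt]
    intro y₀
    rw [ContinuousAt, Metric.tendsto_nhds]
    intro ε hε
    obtain ⟨n, hn⟩ := exists_pow_lt_of_lt_one hε (by norm_num : (1/2 : ℝ) < 1)
    have hNopen : IsOpen ((fun y => y₀⁻¹ * y) ⁻¹' (V n)) :=
      (hVo n).preimage (continuous_mul_left y₀⁻¹)
    have hNmem : y₀ ∈ (fun y => y₀⁻¹ * y) ⁻¹' (V n) := by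
      simp only [Set.mem_preimage, inv_mul_cancel]
      exact hV1 n
    filter_upwards [hNopen.mem_nhds hNmem] with y hy
    have h1' : ρ y₀ y ≤ ((1/2 : ℝ≥0) ^ n : ℝ≥0) := by
      refine (hρ_le y₀ y).trans ?_
      exact_mod_cast hesmall _ n hy
    have h2' : ((1/2 : ℝ≥0) ^ n : ℝ≥0) = ((1/2 : ℝ) ^ n) := by push_cast; ring
    rw [Real.dist_eq]
    calc |ρ x y - ρ x y₀| ≤ ρ y₀ y := htri y y₀
      _ ≤ (1/2 : ℝ) ^ n := by rw [← h2']; exact_mod_cast h1'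
      _ < ε := hn
  refine ⟨fun y => max 0 (1 - 2 * ρ x y), ?_, ?_, ?_, fun y => le_max_left _ _⟩
  · exact continuous_const.max (continuous_const.sub (continuous_const.mul hρcont))
  · have hxx : ρ x x = 0 := @dist_self G I x
    show (0:ℝ) ⊔ (1 - 2 * ρ x x) = 1
    rw [hxx]
    norm_num
  · intro y hy
    have hnot : x⁻¹ * y ∉ V 0 := by
      intro hmem
      have h2 := hV0 hmem
      simp only [hS₀def, Set.mem_preimage, mul_inv_cancel_left] at h2
      exact hy h2
    have h1' : (1 : ℝ≥0) ≤ d x y := by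
      have := (hle (x⁻¹ * y) 0).2 hnot
      simpa using this
    have h2' : (1 : ℝ) ≤ 2 * ρ x y := by
      calc (1:ℝ) ≤ (d x y : ℝ) := by exact_mod_cast h1'
        _ ≤ 2 * ρ x y := hle_ρ x y
    have : 1 - 2 * ρ x y ≤ 0 := by linarith
    exact max_eq_left this

theorem no_locFin_family {G : Type*} [Group G] [TopologicalSpace G] [IsTopologicalGroup G]
    {K : Set G} (hP : Pseudocompact K) {x : ℕ → G} {D : ℕ → Set G}
    (hopen : ∀ n, IsOpen (D n)) (hmem : ∀ n, x n ∈ D n) (hsub : ∀ n, D n ⊆ K)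
    (hdisj : ∀ m n, m ≠ n → ∀ z, z ∈ D m → z ∈ D n → False)
    (hlf : ∀ y : G, ∃ N : Set G, N ∈ nhds y ∧ {n | (D n ∩ N).Nonempty}.Finite) : False := by
  classical
  have hbump : ∀ n, ∃ f : G → ℝ, Continuous f ∧ f (x n) = 1 ∧ (∀ y, y ∉ D n → f y = 0) ∧
      (∀ y, 0 ≤ f y) := fun n => exists_bump (hopen n) (hmem n)
  choose f hfc hfx hf0 hfpos using hbump
  set F : G → ℝ := fun y => ∑' (n : ℕ), ((n : ℝ) + 1) * f n y with hFdef
  have hterm0 : ∀ n y, y ∉ D n → ((n : ℝ) + 1) * f n y = 0 := fun n y hy => by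
    rw [hf0 n y hy, mul_zero]
  have hFx : ∀ n, F (x n) = (n : ℝ) + 1 := by
    intro n
    have h1 : ∀ m, m ≠ n → ((m : ℝ) + 1) * f m (x n) = 0 := by
      intro m hm
      exact hterm0 m (x n) (fun hmem' => hdisj m n hm _ hmem' (hmem n))
    rw [hFdef]
    simp only
    rw [tsum_eq_single n h1, hfx n, mul_one]
  have hFcont : Continuous F := by
    rw [continuous_iff_continuousAt]
    intro y₀
    obtain ⟨N, hN, hfin⟩ := hlf y₀
    set s := hfin.toFinset with hsdef
    have hg : Continuous (fun y => ∑ n ∈ s, ((n : ℝ) + 1) * f n y) :=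
      continuous_finset_sum s fun n _ => continuous_const.mul (hfc n)
    refine hg.continuousAt.congr ?_
    filter_upwards [hN] with y hy
    have : ∀ n, n ∉ s → ((n : ℝ) + 1) * f n y = 0 := by
      intro n hn
      refine hterm0 n y fun hyD => hn ?_
      rw [hsdef, Set.Finite.mem_toFinset]
      exact ⟨y, hyD, hy⟩
    exact (tsum_eq_sum this).symm
  obtain ⟨M, hM⟩ := hP (fun z : K => F z) (hFcont.comp continuous_subtype_val)
  obtain ⟨n, hn⟩ := exists_nat_gt M
  have := hM ⟨x n, hsub n (hmem n)⟩
  rw [hFx n] at this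
  have habs : |(n : ℝ) + 1| = (n : ℝ) + 1 := abs_of_pos (by positivity)
  rw [habs] at this
  linarith

theorem countable_lpc_discrete {X : Type*} [Group X] [TopologicalSpace X] [IsTopologicalGroup X]
    [T2Space X] [Countable X] (h : LocallyPseudocompact X) : DiscreteTopology X := by
  classical
  by_contra hnd
  obtain ⟨U, hU, hPU⟩ := h
  set K : Set X := closure U with hKdef
  have hK1 : (1 : X) ∈ interior K :=
    mem_interior_iff_mem_nhds.2 (Filter.mem_of_superset hU subset_closure)
  -- no open singletons
  have hsing1 : ¬ IsOpen ({(1:X)} : Set X) := fun h' =>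
    hnd (discreteTopology_iff_isOpen_singleton_one.2 h')
  have hsing : ∀ g : X, ¬ IsOpen ({g} : Set X) := by
    intro g hg
    apply hsing1
    have hpre : IsOpen ((fun y => g * y) ⁻¹' {g}) := hg.preimage (continuous_mul_left g)
    have : ((fun y => g * y) ⁻¹' {g}) = {(1:X)} := by
      ext y
      simp [mul_eq_left]
    rwa [this] at hpre
  -- every nonempty open set minus a point is nonempty
  have hinf : ∀ (V : Set X), IsOpen V → V.Nonempty → ∀ a : X, (V \ {a}).Nonempty := by
    intro V hVo hVne a
    rcases Set.eq_empty_or_nonempty (V \ {a}) with hemp | hne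
    · exfalso
      have hVa : V = {a} := by
        apply Set.Subset.antisymm
        · intro z hz
          by_contra hz'
          exact Set.eq_empty_iff_forall_notMem.1 hemp z ⟨hz, hz'⟩
        · intro z hz
          rcases hVne with ⟨w, hw⟩
          have hw' : w = a := by
            by_contra hw'
            exact Set.eq_empty_iff_forall_notMem.1 hemp w ⟨hw, hw'⟩
          rcases hz with rfl
          rwa [← hw']
      exact hsing a (hVa ▸ hVo)
    · exact hne
  -- shrinking step
  have key2 : ∀ (V : Set X), IsOpen V → V.Nonempty → ∀ a b : X, ∃ V' : Set X,
      IsOpen V' ∧ V'.Nonempty ∧ closure V' ⊆ V ∧ a ∉ closure V' ∧ b ∉ closure V' := by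
    intro V hVo hVne a b
    obtain ⟨c, hc⟩ := hinf (V \ {a}) (hVo.sdiff isClosed_singleton) (hinf V hVo hVne a) b
    have hopen2 : IsOpen ((V \ {a}) \ {b}) :=
      (hVo.sdiff isClosed_singleton).sdiff isClosed_singleton
    have hmemc : (V \ {a}) \ {b} ∈ nhds c := hopen2.mem_nhds hc
    obtain ⟨t, ht, htc, hts⟩ := exists_mem_nhds_isClosed_subset hmemc
    have hcl : closure (interior t) ⊆ t :=
      (closure_mono interior_subset).trans htc.closure_eq.subset
    refine ⟨interior t, isOpen_interior, ⟨c, mem_interior_iff_mem_nhds.2 ht⟩, ?_, ?_, ?_⟩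
    · exact hcl.trans (hts.trans (fun z hz => hz.1.1))
    · intro ha
      exact (hts (hcl ha)).1.2 rfl
    · intro hb
      exact (hts (hcl hb)).2 rfl
  -- enumeration
  obtain ⟨e, he⟩ := exists_surjective_nat X
  -- recursion
  set Q : Set X × X → Prop := fun p => IsOpen p.1 ∧ p.1.Nonempty ∧ p.1 ⊆ interior K ∧ p.2 ∈ p.1
    with hQdef
  have hbase : Q (interior K, 1) := ⟨isOpen_interior, ⟨1, hK1⟩, subset_rfl, hK1⟩
  let seq : ℕ → {p : Set X × X // Q p} := fun n => Nat.rec ⟨(interior K, 1), hbase⟩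
    (fun n prev =>
      ⟨((key2 prev.1.1 prev.2.1 prev.2.2.1 (e n) prev.1.2).choose,
        (key2 prev.1.1 prev.2.1 prev.2.2.1 (e n) prev.1.2).choose_spec.2.1.some),
        (key2 prev.1.1 prev.2.1 prev.2.2.1 (e n) prev.1.2).choose_spec.1,
        (key2 prev.1.1 prev.2.1 prev.2.2.1 (e n) prev.1.2).choose_spec.2.1,
        (subset_closure.trans
          ((key2 prev.1.1 prev.2.1 prev.2.2.1 (e n) prev.1.2).choose_spec.2.2.1)).trans
          prev.2.2.2.1,
        (key2 prev.1.1 prev.2.1 prev.2.2.1 (e n) prev.1.2).choose_spec.2.1.some_mem⟩) n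
  set V : ℕ → Set X := fun n => (seq n).1.1 with hVdef
  set x : ℕ → X := fun n => (seq n).1.2 with hxdef
  have hQn : ∀ n, Q (seq n).1 := fun n => (seq n).2
  have hVo : ∀ n, IsOpen (V n) := fun n => (hQn n).1
  have hVK : ∀ n, V n ⊆ interior K := fun n => (hQn n).2.2.1
  have hxV : ∀ n, x n ∈ V n := fun n => (hQn n).2.2.2
  have hstep : ∀ n, closure (V (n+1)) ⊆ V n ∧ e n ∉ closure (V (n+1)) ∧
      x n ∉ closure (V (n+1)) := fun n =>
    ⟨(key2 (seq n).1.1 (seq n).2.1 (seq n).2.2.1 (e n) (seq n).1.2).choose_spec.2.2.1,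
     (key2 (seq n).1.1 (seq n).2.1 (seq n).2.2.1 (e n) (seq n).1.2).choose_spec.2.2.2.1,
     (key2 (seq n).1.1 (seq n).2.1 (seq n).2.2.1 (e n) (seq n).1.2).choose_spec.2.2.2.2⟩
  have hVanti : Antitone V :=
    antitone_nat_of_succ_le fun n => subset_closure.trans (hstep n).1
  -- the discrete family
  set D : ℕ → Set X := fun n => V n \ closure (V (n+1)) with hDdef
  have hDo : ∀ n, IsOpen (D n) := fun n => (hVo n).sdiff isClosed_closure
  have hDx : ∀ n, x n ∈ D n := fun n => ⟨hxV n, (hstep n).2.2⟩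
  have hDK : ∀ n, D n ⊆ K := fun n =>
    (fun z hz => interior_subset (hVK n hz.1))
  have hDdisj : ∀ m n, m ≠ n → ∀ z, z ∈ D m → z ∈ D n → False := by
    have haux : ∀ m n, m < n → ∀ z, z ∈ D m → z ∈ D n → False := by
      intro m n hmn z hzm hzn
      have : z ∈ closure (V (m+1)) := subset_closure (hVanti hmn hzn.1)
      exact hzm.2 this
    intro m n hmn z hzm hzn
    rcases lt_or_gt_of_ne hmn with h' | h'
    · exact haux m n h' z hzm hzn
    · exact haux n m h' z hzn hzm
  have hlf : ∀ y : X, ∃ N : Set X, N ∈ nhds y ∧ {n | (D n ∩ N).Nonempty}.Finite := by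
    intro y
    obtain ⟨m, rfl⟩ := he y
    refine ⟨(closure (V (m+1)))ᶜ, (isClosed_closure.isOpen_compl).mem_nhds (hstep m).2.1, ?_⟩
    refine (Set.finite_Iio (m+1)).subset ?_
    intro n hn
    rcases hn with ⟨z, hzD, hzN⟩
    by_contra hge
    rw [Set.mem_Iio, not_lt] at hge
    exact hzN (subset_closure (hVanti hge hzD.1))
  exact no_locFin_family hPU hDo hDx hDK hDdisj hlf

theorem countable_subgroup_closure {G : Type*} [Group G] {s : Set G} (hs : s.Countable) :
    ((Subgroup.closure s : Subgroup G) : Set G).Countable := by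
  classical
  have hsinv : (s⁻¹ : Set G).Countable := by
    have himg : (fun g : G => g⁻¹) '' s = s⁻¹ := Set.image_inv_eq_inv
    rw [← himg]
    exact hs.image _
  have ht : (s ∪ s⁻¹ : Set G).Countable := hs.union hsinv
  haveI := ht.to_subtype
  set t : Set G := s ∪ s⁻¹ with htdef
  have hsub : ((Subgroup.closure s : Subgroup G) : Set G) ⊆
      Set.range (fun l : List t => (l.map Subtype.val).prod) := by
    intro g hg
    have hg' : g ∈ Submonoid.closure t := by
      rw [← Subgroup.closure_toSubmonoid s]
      exact hg
    obtain ⟨l, hl, hprod⟩ := Submonoid.exists_list_of_mem_closure hg'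
    refine ⟨l.attach.map (fun y => (⟨y.1, hl y.1 y.2⟩ : t)), ?_⟩
    simp only [List.map_map]
    have hmap : (l.attach.map (Subtype.val ∘ fun y : {x // x ∈ l} =>
        (⟨y.1, hl y.1 y.2⟩ : t))) = l := by
      simp
    rw [hmap]
    exact hprod
  exact (Set.countable_range _).mono hsub

theorem discrete_subgroup_open {G : Type*} [Group G] [TopologicalSpace G]
    {H : Subgroup G} (h : DiscreteTopology H) :
    ∃ O : Set G, IsOpen O ∧ (1:G) ∈ O ∧ ∀ g ∈ O, g ∈ H → g = 1 := by
  have hopen : IsOpen ({(1 : H)} : Set H) := isOpen_discrete _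
  rw [isOpen_induced_iff] at hopen
  obtain ⟨t, ht, hpre⟩ := hopen
  refine ⟨t, ht, ?_, ?_⟩
  · have : (⟨1, H.one_mem⟩ : H) ∈ Subtype.val ⁻¹' t := by
      rw [hpre]; rfl
    exact this
  · intro g hg hgH
    have : (⟨g, hgH⟩ : H) ∈ Subtype.val ⁻¹' t := hg
    rw [hpre] at this
    exact congrArg Subtype.val this

theorem discrete_of_countable_subgroups_locallyPseudocompact {G : Type*} [Group G]
    [TopologicalSpace G] [IsTopologicalGroup G] [T2Space G]
    (hG : LocallyPseudocompact G)
    (hcnt : ∀ H : Subgroup G, Set.Countable (H : Set G) → LocallyPseudocompact H) :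
    DiscreteTopology G := by
  classical
  by_contra hnd
  obtain ⟨U, hU, hPU⟩ := hG
  set K : Set G := closure U with hKdef
  have hK1 : (1 : G) ∈ interior K :=
    mem_interior_iff_mem_nhds.2 (Filter.mem_of_superset hU subset_closure)
  have hsing1 : ¬ IsOpen ({(1:G)} : Set G) := fun h' =>
    hnd (discreteTopology_iff_isOpen_singleton_one.2 h')
  -- every countable subgroup is "uniformly discrete at 1"
  have hdisc : ∀ Hs : Subgroup G, ((Hs : Set G)).Countable →
      ∃ O : Set G, IsOpen O ∧ (1:G) ∈ O ∧ ∀ g ∈ O, g ∈ Hs → g = 1 := by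
    intro Hs hHs
    haveI : Countable Hs := hHs.to_subtype
    exact discrete_subgroup_open (countable_lpc_discrete (hcnt Hs hHs))
  -- key: produce new elements outside countable subgroups
  have main_key : ∀ s : Set G, s.Countable →
      ∃ g : G, g ∈ interior K ∧ g ≠ 1 ∧ g ∉ Subgroup.closure s := by
    intro s hs
    obtain ⟨O, hOo, hO1, hOH⟩ := hdisc (Subgroup.closure s) (countable_subgroup_closure hs)
    have hmem : O ∩ interior K ∈ nhds (1:G) :=
      Filter.inter_mem (hOo.mem_nhds hO1) (isOpen_interior.mem_nhds hK1)
    by_cases hsub : O ∩ interior K ⊆ {1}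
    · exfalso
      apply hsing1
      have h1n : ({(1:G)} : Set G) ∈ nhds (1:G) := Filter.mem_of_superset hmem hsub
      rw [isOpen_iff_mem_nhds]
      rintro a (rfl : a = 1)
      exact h1n
    · obtain ⟨g, hg, hg1⟩ := Set.not_subset.1 hsub
      refine ⟨g, hg.2, fun h' => hg1 (by rw [h']; rfl), fun hgH => hg1 ?_⟩
      rw [hOH g hg.1 hgH]
      rfl
  -- recursive construction of the sequence
  set c : List G → G := fun L => (main_key {a | a ∈ L} (L.finite_toSet.countable)).choose
    with hcdef
  set l : ℕ → List G := fun n => Nat.rec [] (fun _ L => c L :: L) n with hldef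
  set x : ℕ → G := fun n => c (l n) with hxdef
  have hx : ∀ n, x n ∈ interior K ∧ x n ≠ 1 ∧ x n ∉ Subgroup.closure {a | a ∈ l n} :=
    fun n => (main_key {a | a ∈ l n} ((l n).finite_toSet.countable)).choose_spec
  have hmeml : ∀ m n, m < n → x m ∈ l n := by
    intro m n
    induction n with
    | zero => intro h; exact absurd h (Nat.not_lt_zero m)
    | succ n ih =>
      intro h
      have hln : l (n+1) = c (l n) :: l n := rfl
      rcases Nat.lt_succ_iff_lt_or_eq.1 h with h' | rfl
      · rw [hln]; exact List.mem_cons_of_mem _ (ih h')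
      · rw [hln]; exact List.mem_cons_self
  have hinj : ∀ m n, m < n → x m ≠ x n := by
    intro m n h hEq
    exact (hx n).2.2 (hEq ▸ Subgroup.subset_closure (hmeml m n h))
  -- the countable subgroup generated by the sequence
  set Dg : Subgroup G := Subgroup.closure (Set.range x) with hDgdef
  obtain ⟨O, hOo, hO1, hOH⟩ := hdisc Dg (countable_subgroup_closure (Set.countable_range x))
  obtain ⟨T₁, hT₁P, hT₁O, hT₁3⟩ := sym_chain hOo hO1
  obtain ⟨W, hWP, hWT₁, hW3⟩ := sym_chain hT₁P.1 hT₁P.2.1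
  have hWo : IsOpen W := hWP.1
  have hW1 : (1:G) ∈ W := hWP.2.1
  have hWsym : ∀ a ∈ W, a⁻¹ ∈ W := hWP.2.2
  have hquad : ∀ a b cc d : G, a ∈ W → b ∈ W → cc ∈ W → d ∈ W → a*b*cc*d ∈ O := by
    intro a b cc d ha hb hc hd
    have h3 : a*b*cc ∈ T₁ := hW3 a ha b hb cc hc
    have h4 : (a*b*cc)*d*1 ∈ O := hT₁3 _ h3 d (hWT₁ hd) 1 hT₁P.2.1
    simpa using h4
  set T : G → Set G := fun a => (fun z => a⁻¹ * z) ⁻¹' W with hTdef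
  have hTo : ∀ a, IsOpen (T a) := fun a => hWo.preimage (continuous_mul_left a⁻¹)
  have hTmem : ∀ a, a ∈ T a := fun a => by
    simp only [hTdef, Set.mem_preimage, inv_mul_cancel]
    exact hW1
  have key3 : ∀ a b y : G, (T a ∩ T y).Nonempty → (T b ∩ T y).Nonempty → a⁻¹ * b ∈ O := by
    rintro a b y ⟨z1, hz1a, hz1y⟩ ⟨z2, hz2b, hz2y⟩
    have e1 : a⁻¹ * z1 ∈ W := hz1a
    have e2 : y⁻¹ * z1 ∈ W := hz1y
    have e2' : z1⁻¹ * y ∈ W := by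
      have := hWsym _ e2; simpa [mul_inv_rev] using this
    have e3 : y⁻¹ * z2 ∈ W := hz2y
    have e4 : b⁻¹ * z2 ∈ W := hz2b
    have e4' : z2⁻¹ * b ∈ W := by
      have := hWsym _ e4; simpa [mul_inv_rev] using this
    have hmem := hquad _ _ _ _ e1 e2' e3 e4'
    have heq : (a⁻¹ * z1) * (z1⁻¹ * y) * (y⁻¹ * z2) * (z2⁻¹ * b) = a⁻¹ * b := by group
    rwa [heq] at hmem
  have hxyD : ∀ m n : ℕ, (x m)⁻¹ * x n ∈ Dg := fun m n =>
    Dg.mul_mem (Dg.inv_mem (Subgroup.subset_closure (Set.mem_range_self m)))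
      (Subgroup.subset_closure (Set.mem_range_self n))
  have hkey4 : ∀ m n y, (T (x m) ∩ T y).Nonempty → (T (x n) ∩ T y).Nonempty → m = n := by
    intro m n y h1 h2
    have hmem := key3 (x m) (x n) y h1 h2
    have heq1 : (x m)⁻¹ * x n = 1 := hOH _ hmem (hxyD m n)
    have heq2 : x m = x n := by rwa [inv_mul_eq_one] at heq1
    by_contra hne
    rcases lt_or_gt_of_ne hne with h' | h'
    · exact hinj m n h' heq2
    · exact hinj n m h' heq2.symm
  set D : ℕ → Set G := fun n => T (x n) ∩ interior K with hDdef
  have hDo : ∀ n, IsOpen (D n) := fun n => (hTo (x n)).inter isOpen_interior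
  have hDx : ∀ n, x n ∈ D n := fun n => ⟨hTmem (x n), (hx n).1⟩
  have hDK : ∀ n, D n ⊆ K := fun n =>
    Set.Subset.trans Set.inter_subset_right interior_subset
  have hDdisj : ∀ m n, m ≠ n → ∀ z, z ∈ D m → z ∈ D n → False := by
    intro m n hmn z hzm hzn
    exact hmn (hkey4 m n (x m) ⟨x m, hTmem (x m), hTmem (x m)⟩ ⟨z, hzn.1, hzm.1⟩)
  have hlf : ∀ y : G, ∃ N : Set G, N ∈ nhds y ∧ {n | (D n ∩ N).Nonempty}.Finite := by
    intro y
    refine ⟨T y, (hTo y).mem_nhds (hTmem y), ?_⟩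
    have hss : {n | (D n ∩ T y).Nonempty}.Subsingleton := by
      rintro m ⟨z1, hz1⟩ n ⟨z2, hz2⟩
      exact hkey4 m n y ⟨z1, hz1.1.1, hz1.2⟩ ⟨z2, hz2.1.1, hz2.2⟩
    exact hss.finite
  exact no_locFin_family hPU hDo hDx hDK hDdisj hlf
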